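/- Let φ : ℝ → ℝ be compactly supported and C¹. Then there is a constant C, depending only on φ, such that for every ℓ > 0 and every m ∈ ℝ, the function f(x) = e^{imx}·φ(x/ℓ) satisfies ‖f‖²_{H^{1/2}} ≤ C·√(1 + m²·ℓ²). -/

import Mathlib

open MeasureTheory Real Set Filter
open scoped Classical Topology ENNReal NNReal

noncomputable section

/-! ## Generic log-gas quantities -/

/-- Hamiltonian of the one-dimensional log-gas with potential `V`. -/
def Hamil (V : ℝ → ℝ) (N : ℕ) (X : Fin N → ℝ) : ℝ :=
  (1/2) * ∑ i : Fin N, ∑ j : Fin N, (if i ≠ j then -Real.log |X i - X j| else 0)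
    + N * ∑ i : Fin N, V (X i)

/-- Partition function `Z_{N,β}`. -/
def partZ (β : ℝ) (V : ℝ → ℝ) (N : ℕ) : ℝ :=
  ∫ X : Fin N → ℝ, Real.exp (-β * Hamil V N X)

/-- Gibbs measure `P_{N,β}`. -/
def gibbs (β : ℝ) (V : ℝ → ℝ) (N : ℕ) : Measure (Fin N → ℝ) :=
  volume.withDensity fun X => ENNReal.ofReal (Real.exp (-β * Hamil V N X) / partZ β V N)

/-- Energy functional `I_W(μ)`. -/
def enFun (W : ℝ → ℝ) (μ : Measure ℝ) : ℝ :=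
  (1/2) * ∫ x, (∫ y, (-Real.log |x - y|) ∂μ) ∂μ + ∫ x, W x ∂μ

/-- Fluctuation of the linear statistic `ξ`. -/
def fluct (μ : Measure ℝ) (N : ℕ) (ξ : ℝ → ℝ) (X : Fin N → ℝ) : ℝ :=
  (∑ i : Fin N, ξ (X i)) - N * ∫ x, ξ x ∂μ

/-- Double integral of a kernel `K` against the square of the fluctuation measure
`∑ δ_{x_i} - Nμ`. -/
def fluctPair (μ : Measure ℝ) (N : ℕ) (K : ℝ → ℝ → ℝ) (X : Fin N → ℝ) : ℝ :=
  (∑ i : Fin N, ∑ j : Fin N, K (X i) (X j))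
    - N * ∑ i : Fin N, ∫ y, K (X i) y ∂μ
    - N * ∑ j : Fin N, ∫ x, K x (X j) ∂μ
    + (N:ℝ)^2 * ∫ x, (∫ y, K x y ∂μ) ∂μ

/-- Next-order energy `F_N(X_N, μ)` (off-diagonal double integral of `-log` against
`(∑ δ_{x_i} - Nμ)⊗²`). -/
def nextOrderF (N : ℕ) (X : Fin N → ℝ) (μ : Measure ℝ) : ℝ :=
  (1/2) * ((∑ i : Fin N, ∑ j : Fin N, (if i ≠ j then -Real.log |X i - X j| else 0))
    - 2 * N * ∑ i : Fin N, ∫ y, -Real.log |X i - y| ∂μ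
    + (N:ℝ)^2 * ∫ x, (∫ y, -Real.log |x - y| ∂μ) ∂μ)

/-- `C^k` norm of a function: sup of the derivatives of order `≤ k`. -/
def Cnorm (k : ℕ) (θ : ℝ → ℝ) : ℝ :=
  ⨆ i : Fin (k+1), ⨆ x : ℝ, |iteratedDeriv i.1 θ x|

/-- Fourier transform with the convention `∫ f(x) e^{-iλx} dx`. -/
def fourierT (f : ℝ → ℂ) (l : ℝ) : ℂ :=
  ∫ x : ℝ, f x * Complex.exp (-(Complex.I * (l : ℂ) * (x : ℂ)))

/-- Squared `H^{1/2}` seminorm of a complex-valued function. -/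
def H12C (f : ℝ → ℂ) : ℝ :=
  (1/(4*π^2)) * ∫ l : ℝ, |l| * ‖fourierT f l‖^2

/-- Squared `H^{1/2}` seminorm of a real-valued function. -/
def H12 (θ : ℝ → ℝ) : ℝ := H12C fun x => (θ x : ℂ)

/-- Rescaled test function `ξ_{z,L} = θ((·-z)/L)`. -/
def resc (θ : ℝ → ℝ) (z L : ℝ) : ℝ → ℝ := fun x => θ ((x - z)/L)

/-! ## Electrostatic machinery -/

/-- Euclidean norm on `ℝ²`. -/
def enorm2 (p : ℝ × ℝ) : ℝ := Real.sqrt (p.1^2 + p.2^2)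

/-- Electrostatic potential of the configuration `Y` relative to the measure `μ`. -/
def elPot (μ : Measure ℝ) (N : ℕ) (Y : Fin N → ℝ) (p : ℝ × ℝ) : ℝ :=
  (∑ i : Fin N, -Real.log (enorm2 (p - (Y i, 0))))
    - ∫ y, -Real.log (enorm2 (p - (y, 0))) ∂μ

/-- Planar truncation `f̄_η`. -/
def fbar (η : ℝ) (p : ℝ × ℝ) : ℝ := max (Real.log (η / enorm2 p)) 0

/-- One-dimensional truncation `f_η`. -/
def ftr (η : ℝ) (x : ℝ) : ℝ := max (Real.log (η / |x|)) 0

/-- Minimal distances `r̃_i` relative to the set `Ω`. -/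
def rtil (N : ℕ) (Y : Fin N → ℝ) (Ω : Set ℝ) (i : Fin N) : ℝ :=
  if Metric.infDist (Y i) (frontier Ω) < 1/2 then 1/4
  else (1/4) * (insert (1:ℝ)
      ((Finset.univ.filter fun j : Fin N => j ≠ i ∧ Y j ∈ Ω).image
        fun j => |Y i - Y j|)).min' (Finset.insert_nonempty _ _)

/-- Truncated electrostatic potential `u_{r̃}`. -/
def elPotTr (μ : Measure ℝ) (N : ℕ) (Y : Fin N → ℝ) (Ω : Set ℝ) (p : ℝ × ℝ) : ℝ :=
  elPot μ N Y p - ∑ i : Fin N, fbar (rtil N Y Ω i) (p - (Y i, 0))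

/-- Squared (Euclidean) gradient of a function on `ℝ²`. -/
def gradSq (f : ℝ × ℝ → ℝ) (p : ℝ × ℝ) : ℝ :=
  (fderiv ℝ f p (1, 0))^2 + (fderiv ℝ f p (0, 1))^2

/-- The true local energy `F^Ω(Y, μ)` at scale `L`. -/
def locEnergy (μ : Measure ℝ) (N : ℕ) (Y : Fin N → ℝ) (Ω : Set ℝ) (L : ℝ) : ℝ :=
  (1/(4*π)) * ((∫ p in Ω ×ˢ Icc (-L) L, gradSq (elPotTr μ N Y Ω) p)
      - 2*π * ∑ i ∈ Finset.univ.filter (fun i : Fin N => Y i ∈ Ω), (-Real.log (rtil N Y Ω i)))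
    - ∑ i ∈ Finset.univ.filter (fun i : Fin N => Y i ∈ Ω), ∫ x, ftr (rtil N Y Ω i) (x - Y i) ∂μ

/-- Number of points of the configuration lying in `Ω`. -/
def ptsIn (N : ℕ) (Y : Fin N → ℝ) (Ω : Set ℝ) : ℕ :=
  (Finset.univ.filter fun i : Fin N => Y i ∈ Ω).card

/-- Transport map on points, `φ_t = id + tψ`. -/
def phiT (ψ : ℝ → ℝ) (t x : ℝ) : ℝ := x + t * ψ x

/-- Transport map on configurations. -/
def PhiN (ψ : ℝ → ℝ) (t : ℝ) (N : ℕ) (X : Fin N → ℝ) : Fin N → ℝ := fun i => phiT ψ t (X i)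

/-- The condition `‖t ψ'‖_∞ < 1/2`. -/
def SmallPert (t : ℝ) (ψ : ℝ → ℝ) : Prop := ∃ ρ : ℝ, ρ < 1/2 ∧ ∀ x, |t * deriv ψ x| ≤ ρ

/-! ## The β-ensemble setup satisfying (A1)–(A4) -/

/-- Data for a one-dimensional log-gas in the multi-cut, non-critical regime. -/
structure LogGas where
  β : ℝ
  V : ℝ → ℝ
  n : ℕ
  a : Fin n → ℝ
  b : Fin n → ℝ
  S : ℝ → ℝ
  cV : ℝ
  hβ : 0 < β
  hV : ContDiff ℝ 3 V
  hgrowth : Tendsto (fun x => V x + Real.log |x|) (cocompact ℝ) atTop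
  hn : 0 < n
  hab : ∀ i, a i < b i
  hord : ∀ i j : Fin n, i < j → b i < a j
  hS : ContDiff ℝ (⊤ : ℕ∞) S

namespace LogGas

variable (g : LogGas)

/-- Support `Σ_V` of the equilibrium measure. -/
def sptV : Set ℝ := ⋃ i, Icc (g.a i) (g.b i)

/-- `σ(x) = ∏ √(|x-aᵢ||x-bᵢ|)`. -/
def σf (x : ℝ) : ℝ := ∏ i, Real.sqrt (|x - g.a i| * |x - g.b i|)

/-- Density of the equilibrium measure. -/
def dens (x : ℝ) : ℝ := Set.indicator g.sptV (fun y => g.S y * g.σf y) x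

/-- The equilibrium measure `μ_V`. -/
def μV : Measure ℝ := volume.withDensity fun x => ENNReal.ofReal (g.dens x)

/-- Logarithmic potential `h^{μ_V}`. -/
def hpot (x : ℝ) : ℝ := ∫ y, -Real.log |x - y| ∂g.μV

/-- Effective potential `ζ_V`. -/
def ζV (x : ℝ) : ℝ := g.hpot x + g.V x - g.cV

/-- `d = (1/4) minᵢ (bᵢ - aᵢ)`. -/
def dB : ℝ := (1/4) * ⨅ i, (g.b i - g.a i)

/-- The bulk `𝖡`. -/
def Bulk : Set ℝ := {x ∈ g.sptV | g.dB ≤ Metric.infDist x (frontier g.sptV)}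

/-- The blown-up bulk `𝖡' = N·𝖡`. -/
def Bulk' (N : ℕ) : Set ℝ := (fun x => (N:ℝ) * x) '' g.Bulk

/-- Density of the blown-up equilibrium measure. -/
def densN (N : ℕ) (x : ℝ) : ℝ := g.dens (x / N)

/-- Blown-up equilibrium measure `μ` (total mass `N`). -/
def μN (N : ℕ) : Measure ℝ := volume.withDensity fun x => ENNReal.ofReal (g.densN N x)

/-- The endpoints of `Σ_V`. -/
def endpts : Finset ℝ := Finset.univ.image g.a ∪ Finset.univ.image g.b

/-- Minimal distance between two distinct endpoints of `Σ_V`. -/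
def minGap : ℝ := sInf {r : ℝ | ∃ p ∈ g.endpts, ∃ q ∈ g.endpts, p ≠ q ∧ r = |p - q|}

/-- The Gibbs measure `P_{N,β}`. -/
def gibbsN (N : ℕ) : Measure (Fin N → ℝ) := gibbs g.β g.V N

/-- Assumptions (A1)–(A4), together with the standing assumption that the partition
functions are finite and positive. -/
structure A : Prop where
  hSpos : ∀ x ∈ g.sptV, 0 < g.S x
  hprob : IsProbabilityMeasure g.μV
  hmin : ∀ μ : Measure ℝ, IsProbabilityMeasure μ →
    (∃ K : Set ℝ, IsCompact K ∧ μ Kᶜ = 0) → enFun g.V g.μV ≤ enFun g.V μ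
  huniq : ∀ μ : Measure ℝ, IsProbabilityMeasure μ →
    (∃ K : Set ℝ, IsCompact K ∧ μ Kᶜ = 0) → enFun g.V μ = enFun g.V g.μV → μ = g.μV
  hEL : ∀ x ∈ g.sptV, g.hpot x + g.V x = g.cV
  hζ : ∀ x ∉ g.sptV, 0 < g.ζV x
  hZint : ∀ N : ℕ, Integrable (fun X : Fin N → ℝ => Real.exp (-g.β * Hamil g.V N X))
  hZpos : ∀ N : ℕ, 0 < partZ g.β g.V N

/-- Characterization of the transport map `ψ` (with constant `cξ`) associated with the
test function `ξ`, relative to the neighborhood `U` of `Σ_V`. -/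
def IsTransport (U : Set ℝ) (ξ ψ : ℝ → ℝ) (cξ : ℝ) : Prop :=
  (∀ x ∈ g.sptV, ψ x = -(1/(π^2 * g.S x)) * ∫ y in g.sptV, (ξ y - ξ x)/(g.σf y * (y - x)))
  ∧ (∀ x ∈ U \ g.sptV,
      ψ x = ((∫ y in g.sptV, ψ y * g.dens y / (x - y)) + ξ x + cξ)
        / ((∫ y in g.sptV, g.dens y / (x - y)) - deriv g.V x))
  ∧ (∀ x ∈ U, -(ψ x) * deriv g.V x + (∫ y, (ψ x - ψ y)/(x - y) ∂g.μV) = ξ x + cξ)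

/-- `U` is a bounded open neighborhood of `Σ_V` on which `ζ_V' = M σ` with `M > 0` smooth. -/
def GoodNbhd (U : Set ℝ) : Prop :=
  IsOpen U ∧ Bornology.IsBounded U ∧ g.sptV ⊆ U ∧
  ∃ M : ℝ → ℝ, ContDiffOn ℝ (⊤ : ℕ∞) M (U \ g.sptV) ∧
    ∀ x ∈ U \ g.sptV, 0 < M x ∧ deriv g.ζV x = M x * g.σf x

end LogGas

/-- Energy difference `τ_t` associated with the transport `ψ` of `ξ`. -/
def tauT (g : LogGas) (ξ ψ : ℝ → ℝ) (t c x : ℝ) : ℝ :=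
  (∫ y, -Real.log |phiT ψ t x - phiT ψ t y| ∂g.μV)
    + (g.V (phiT ψ t x) + t * ξ (phiT ψ t x))
    - (∫ y, -Real.log |x - y| ∂g.μV) - g.V x - t * c

/-- `Main₁ = I_{V_t}(φ_t#μ_V) - I_V(μ_V) - t ∫ ξ dμ_V`. -/
def Main1 (g : LogGas) (ξ ψ : ℝ → ℝ) (t : ℝ) : ℝ :=
  enFun (fun x => g.V x + t * ξ x) (g.μV.map (phiT ψ t)) - enFun g.V g.μV
    - t * ∫ x, ξ x ∂g.μV

/-- `Error₁ = (1-β) ∫ log φ_t' dμ_V`. -/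
def Err1 (g : LogGas) (ψ : ℝ → ℝ) (t : ℝ) : ℝ :=
  (1 - g.β) * ∫ x, Real.log (1 + t * deriv ψ x) ∂g.μV

/-- The kernel `K_t(x,y) = -log |(φ_t x - φ_t y)/(x-y)|`, extended by `-log φ_t'` on the
diagonal. -/
def Kker (ψ : ℝ → ℝ) (t x y : ℝ) : ℝ :=
  if x = y then -Real.log (1 + t * deriv ψ x)
  else -Real.log (|phiT ψ t x - phiT ψ t y| / |x - y|)

/-- `Error₂`. -/
def Err2 (g : LogGas) (ψ : ℝ → ℝ) (t : ℝ) (N : ℕ) (X : Fin N → ℝ) : ℝ :=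
  fluctPair g.μV N (Kker ψ t) X

/-- `Error₃`. -/
def Err3 (g : LogGas) (ξ ψ : ℝ → ℝ) (t c : ℝ) (N : ℕ) (X : Fin N → ℝ) : ℝ :=
  fluct g.μV N (fun x => (1 - 1/g.β) * Real.log (1 + t * deriv ψ x) + N * tauT g ξ ψ t c x) X

lemma norm_phase (l x : ℝ) : ‖Complex.exp (-(Complex.I * (l : ℂ) * (x : ℂ)))‖ = 1 := by
  rw [Complex.norm_exp]
  simp

lemma fourierT_norm_le (f : ℝ → ℂ) (l : ℝ) : ‖fourierT f l‖ ≤ ∫ x, ‖f x‖ := by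
  refine le_trans (norm_integral_le_integral_norm _) ?_
  refine le_of_eq (integral_congr_ae (Filter.Eventually.of_forall fun x => ?_))
  simp only [norm_mul, norm_phase, mul_one]

lemma fourierT_continuous {f : ℝ → ℂ} (hf : Integrable f) : Continuous (fourierT f) := by
  apply continuous_of_dominated (bound := fun x => ‖f x‖)
  · intro l
    exact hf.aestronglyMeasurable.mul
      ((Complex.continuous_exp.comp (by fun_prop : Continuous fun x : ℝ =>
        -(Complex.I * (l:ℂ) * (x:ℂ)))).aestronglyMeasurable)
  · intro l
    exact Filter.Eventually.of_forall fun x => by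
      simp only [norm_mul, norm_phase, mul_one]; exact le_refl _
  · exact hf.norm
  · exact Filter.Eventually.of_forall fun x =>
      continuous_const.mul (Complex.continuous_exp.comp (by fun_prop :
        Continuous fun l : ℝ => -(Complex.I * (l:ℂ) * (x:ℂ))))

section Kernel
variable {ε : ℝ}

def kf (ε s : ℝ) : ℝ := Real.sqrt (π/ε) * Real.exp (-s^2/(4*ε))

lemma kf_nonneg (hε : 0 < ε) (s : ℝ) : 0 ≤ kf ε s :=
  mul_nonneg (Real.sqrt_nonneg _) (Real.exp_nonneg _)

lemma kf_integrable (hε : 0 < ε) : Integrable (kf ε) := by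
  have h : Integrable (fun s : ℝ => Real.exp (-(1/(4*ε)) * s^2)) :=
    integrable_exp_neg_mul_sq (by positivity)
  have : (fun s : ℝ => Real.exp (-s^2/(4*ε))) = fun s : ℝ => Real.exp (-(1/(4*ε)) * s^2) := by
    funext s; ring_nf
  unfold kf
  simp_rw [show ∀ s : ℝ, -s^2/(4*ε) = -(1/(4*ε)) * s^2 from fun s => by ring]
  exact h.const_mul _

lemma kf_integral (hε : 0 < ε) : ∫ s : ℝ, kf ε s = 2*π := by
  unfold kf
  rw [integral_const_mul]
  have h : (fun s : ℝ => Real.exp (-s^2/(4*ε))) = fun s : ℝ => Real.exp (-(1/(4*ε)) * s^2) := by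
    funext s; ring_nf
  rw [h, integral_gaussian]
  rw [← Real.sqrt_mul (by positivity)]
  have : π / ε * (π / (1/(4*ε))) = (2*π)^2 := by field_simp; ring
  rw [this, Real.sqrt_sq (by positivity)]

lemma kf_eq (hε : 0 < ε) (s : ℝ) :
    ∫ u : ℝ, Complex.exp (-(ε:ℂ) * (u:ℂ)^2) * Complex.exp (-(Complex.I * (u:ℂ) * (s:ℂ)))
      = ((kf ε s : ℝ) : ℂ) := by
  have hb : 0 < ((ε:ℂ)).re := by simpa using hε
  have h2 := fourierIntegral_gaussian hb (-(s:ℂ))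
  have h3 : ∫ u : ℝ, Complex.exp (-(ε:ℂ) * (u:ℂ)^2) * Complex.exp (-(Complex.I * (u:ℂ) * (s:ℂ)))
      = ∫ u : ℝ, Complex.exp (Complex.I * (-(s:ℂ)) * (u:ℂ)) * Complex.exp (-(ε:ℂ) * (u:ℂ)^2) := by
    refine integral_congr_ae (Filter.Eventually.of_forall fun u => ?_)
    show Complex.exp (-(ε:ℂ) * (u:ℂ)^2) * Complex.exp (-(Complex.I * (u:ℂ) * (s:ℂ)))
      = Complex.exp (Complex.I * (-(s:ℂ)) * (u:ℂ)) * Complex.exp (-(ε:ℂ) * (u:ℂ)^2)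
    have e1 : (-(Complex.I * (u:ℂ) * (s:ℂ))) = Complex.I * (-(s:ℂ)) * (u:ℂ) := by ring
    rw [e1, mul_comm]
  rw [h3, h2]
  unfold kf
  rw [Complex.ofReal_mul, Complex.ofReal_exp]
  congr 1
  · rw [Real.sqrt_eq_rpow, Complex.ofReal_cpow (by positivity)]
    push_cast
    norm_num
  · congr 1
    push_cast
    ring
end Kernel

lemma conj_fourierT {f : ℝ → ℂ} (hfi : Integrable f) (u : ℝ) :
    (starRingEnd ℂ) (fourierT f u)
      = ∫ y : ℝ, (starRingEnd ℂ) (f y) * Complex.exp (Complex.I * (u:ℂ) * (y:ℂ)) := by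
  rw [fourierT, ← integral_conj]
  refine integral_congr_ae (Filter.Eventually.of_forall fun y => ?_)
  show (starRingEnd ℂ) (f y * Complex.exp (-(Complex.I * (u:ℂ) * (y:ℂ)))) = _
  rw [map_mul, ← Complex.exp_conj]
  congr 2
  simp

lemma eps_bound {f : ℝ → ℂ} (hc : Continuous f) (hs : HasCompactSupport f) {M ε : ℝ}
    (hM : ∀ x, ‖f x‖ ≤ M) (hε : 0 < ε) :
    ∫ u : ℝ, Real.exp (-ε*u^2) * ‖fourierT f u‖^2 ≤ 2*π*M * ∫ x, ‖f x‖ := by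
  have hfi : Integrable f := hc.integrable_of_hasCompactSupport hs
  set g := fourierT f with hgdef
  have hg : Continuous g := fourierT_continuous hfi
  have hM0 : 0 ≤ M := le_trans (norm_nonneg (f 0)) (hM 0)
  set R := ∫ x : ℝ, ‖f x‖ with hRdef
  have hR0 : 0 ≤ R := integral_nonneg fun x => norm_nonneg _
  have hgR : ∀ u, ‖g u‖ ≤ R := fourierT_norm_le f
  set c : ℝ → ℂ := fun u => ((Real.exp (-ε*u^2) : ℝ) : ℂ) with hcdef
  have hcnorm : ∀ u, ‖c u‖ = Real.exp (-ε*u^2) := fun u => by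
    simp only [hcdef, Complex.norm_real, Real.norm_eq_abs]
    exact abs_of_nonneg (Real.exp_nonneg _)
  have hccont : Continuous c := Complex.continuous_ofReal.comp (by fun_prop)
  have hgauss : Integrable (fun u : ℝ => Real.exp (-ε*u^2)) := by
    simpa using integrable_exp_neg_mul_sq hε
  -- the inner convolution value
  have hinner_eq : ∀ y : ℝ, (∫ u : ℝ, c u * Complex.exp (Complex.I * (u:ℂ) * (y:ℂ)) * g u)
      = ∫ x : ℝ, f x * ((kf ε (x - y) : ℝ) : ℂ) := by
    intro y
    have h1 : (∫ u : ℝ, c u * Complex.exp (Complex.I * (u:ℂ) * (y:ℂ)) * g u)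
        = ∫ u : ℝ, ∫ x : ℝ, (c u * Complex.exp (Complex.I * (u:ℂ) * (y:ℂ)))
            * (f x * Complex.exp (-(Complex.I * (u:ℂ) * (x:ℂ)))) := by
      refine integral_congr_ae (Filter.Eventually.of_forall fun u => ?_)
      show c u * Complex.exp (Complex.I * (u:ℂ) * (y:ℂ)) * g u = _
      rw [hgdef, fourierT, ← integral_const_mul]
    have hswap : Integrable (Function.uncurry fun (u x : ℝ) =>
        (c u * Complex.exp (Complex.I * (u:ℂ) * (y:ℂ)))
          * (f x * Complex.exp (-(Complex.I * (u:ℂ) * (x:ℂ))))) (volume.prod volume) := by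
      refine Integrable.mono' (g := fun p : ℝ × ℝ => Real.exp (-ε*p.1^2) * ‖f p.2‖)
        (hgauss.mul_prod hfi.norm) ?_ ?_
      · refine Continuous.aestronglyMeasurable ?_
        apply Continuous.mul
        · apply Continuous.mul (hccont.comp continuous_fst)
          exact Complex.continuous_exp.comp (by fun_prop)
        · apply Continuous.mul (hc.comp continuous_snd)
          exact Complex.continuous_exp.comp (by fun_prop)
      · refine Filter.Eventually.of_forall fun p => ?_
        have he1 : ‖Complex.exp (Complex.I * (p.1:ℂ) * (y:ℂ))‖ = 1 := by
          rw [Complex.norm_exp]; simp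
        rw [Function.uncurry]
        simp only [norm_mul, he1, norm_phase, hcnorm, mul_one]
        exact le_rfl
    rw [h1, integral_integral_swap hswap]
    refine integral_congr_ae (Filter.Eventually.of_forall fun x => ?_)
    have h2 : ∀ u : ℝ, (c u * Complex.exp (Complex.I * (u:ℂ) * (y:ℂ)))
          * (f x * Complex.exp (-(Complex.I * (u:ℂ) * (x:ℂ))))
        = f x * (Complex.exp (-(ε:ℂ) * (u:ℂ)^2)
            * Complex.exp (-(Complex.I * (u:ℂ) * ((x - y : ℝ):ℂ)))) := by
      intro u
      have hce : c u = Complex.exp (-(ε:ℂ) * (u:ℂ)^2) := by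
        simp only [hcdef]
        rw [Complex.ofReal_exp]
        congr 1
        push_cast
        ring
      have e3 : Complex.exp (Complex.I*(u:ℂ)*(y:ℂ)) * Complex.exp (-(Complex.I*(u:ℂ)*(x:ℂ)))
          = Complex.exp (-(Complex.I*(u:ℂ)*((x-y:ℝ):ℂ))) := by
        rw [← Complex.exp_add]
        congr 1
        push_cast
        ring
      calc c u * Complex.exp (Complex.I*(u:ℂ)*(y:ℂ))
            * (f x * Complex.exp (-(Complex.I*(u:ℂ)*(x:ℂ))))
          = f x * (c u * (Complex.exp (Complex.I*(u:ℂ)*(y:ℂ))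
              * Complex.exp (-(Complex.I*(u:ℂ)*(x:ℂ))))) := by ring
        _ = f x * (Complex.exp (-(ε:ℂ) * (u:ℂ)^2)
              * Complex.exp (-(Complex.I * (u:ℂ) * ((x - y : ℝ):ℂ)))) := by rw [e3, hce]
    calc (∫ u : ℝ, (c u * Complex.exp (Complex.I * (u:ℂ) * (y:ℂ)))
          * (f x * Complex.exp (-(Complex.I * (u:ℂ) * (x:ℂ)))))
        = ∫ u : ℝ, f x * (Complex.exp (-(ε:ℂ) * (u:ℂ)^2)
            * Complex.exp (-(Complex.I * (u:ℂ) * ((x - y : ℝ):ℂ)))) :=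
          integral_congr_ae (Filter.Eventually.of_forall fun u => h2 u)
      _ = f x * ∫ u : ℝ, Complex.exp (-(ε:ℂ) * (u:ℂ)^2)
            * Complex.exp (-(Complex.I * (u:ℂ) * ((x - y : ℝ):ℂ))) := integral_const_mul _ _
      _ = f x * ((kf ε (x - y) : ℝ) : ℂ) := by rw [kf_eq hε (x - y)]
  -- outer swap integrability
  have hswap2 : Integrable (Function.uncurry fun (u y : ℝ) =>
      (c u * g u) * ((starRingEnd ℂ) (f y) * Complex.exp (Complex.I * (u:ℂ) * (y:ℂ))))
      (volume.prod volume) := by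
    refine Integrable.mono' (g := fun p : ℝ × ℝ => (R * Real.exp (-ε*p.1^2)) * ‖f p.2‖)
      ((hgauss.const_mul R).mul_prod hfi.norm) ?_ ?_
    · refine Continuous.aestronglyMeasurable ?_
      apply Continuous.mul
      · exact (hccont.comp continuous_fst).mul (hg.comp continuous_fst)
      · exact ((hc.star).comp continuous_snd).mul
          (Complex.continuous_exp.comp (by fun_prop))
    · refine Filter.Eventually.of_forall fun p => ?_
      rw [Function.uncurry]
      have he1 : ‖Complex.exp (Complex.I * (p.1:ℂ) * (p.2:ℂ))‖ = 1 := by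
        rw [Complex.norm_exp]; simp
      simp only [norm_mul, he1, hcnorm, mul_one, RCLike.norm_conj]
      have h1 := hgR p.1
      have h2 := Real.exp_nonneg (-ε*p.1^2)
      have h3 := norm_nonneg (f p.2)
      nlinarith [mul_le_mul_of_nonneg_right (mul_le_mul_of_nonneg_left h1 h2) h3]
  have claim1 : ((∫ u : ℝ, Real.exp (-ε*u^2) * ‖g u‖^2 : ℝ) : ℂ)
      = ∫ y : ℝ, (starRingEnd ℂ) (f y) * ∫ x : ℝ, f x * ((kf ε (x - y) : ℝ) : ℂ) := by
    calc ((∫ u : ℝ, Real.exp (-ε*u^2) * ‖g u‖^2 : ℝ) : ℂ)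
        = ∫ u : ℝ, ((Real.exp (-ε*u^2) * ‖g u‖^2 : ℝ) : ℂ) := integral_ofReal.symm
      _ = ∫ u : ℝ, ∫ y : ℝ, (c u * g u) * ((starRingEnd ℂ) (f y)
            * Complex.exp (Complex.I * (u:ℂ) * (y:ℂ))) := by
          refine integral_congr_ae (Filter.Eventually.of_forall fun u => ?_)
          show ((Real.exp (-ε*u^2) * ‖g u‖^2 : ℝ) : ℂ) = _
          have e1 : ((Real.exp (-ε*u^2) * ‖g u‖^2 : ℝ) : ℂ)
              = (c u * g u) * (starRingEnd ℂ) (g u) := by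
            rw [Complex.ofReal_mul, mul_assoc, Complex.mul_conj]
            congr 1
            rw [Complex.normSq_eq_norm_sq]
          rw [e1, hgdef, conj_fourierT hfi u, ← integral_const_mul]
      _ = ∫ y : ℝ, ∫ u : ℝ, (c u * g u) * ((starRingEnd ℂ) (f y)
            * Complex.exp (Complex.I * (u:ℂ) * (y:ℂ))) := integral_integral_swap hswap2
      _ = ∫ y : ℝ, (starRingEnd ℂ) (f y) * ∫ x : ℝ, f x * ((kf ε (x - y) : ℝ) : ℂ) := by
          refine integral_congr_ae (Filter.Eventually.of_forall fun y => ?_)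
          show (∫ u : ℝ, (c u * g u) * ((starRingEnd ℂ) (f y)
              * Complex.exp (Complex.I * (u:ℂ) * (y:ℂ))))
            = (starRingEnd ℂ) (f y) * ∫ x : ℝ, f x * ((kf ε (x - y) : ℝ) : ℂ)
          rw [← hinner_eq y, ← integral_const_mul]
          refine integral_congr_ae (Filter.Eventually.of_forall fun u => ?_)
          show (c u * g u) * ((starRingEnd ℂ) (f y) * Complex.exp (Complex.I * (u:ℂ) * (y:ℂ)))
            = (starRingEnd ℂ) (f y) * (c u * Complex.exp (Complex.I * (u:ℂ) * (y:ℂ)) * g u)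
          ring
  have hI0 : 0 ≤ ∫ u : ℝ, Real.exp (-ε*u^2) * ‖g u‖^2 :=
    integral_nonneg fun u => by positivity
  have hinner_bd : ∀ y : ℝ, ‖∫ x : ℝ, f x * ((kf ε (x - y) : ℝ) : ℂ)‖ ≤ M * (2*π) := by
    intro y
    refine le_trans (norm_integral_le_integral_norm _) ?_
    calc ∫ x : ℝ, ‖f x * ((kf ε (x - y) : ℝ) : ℂ)‖
        ≤ ∫ x : ℝ, M * kf ε (x - y) := by
          refine integral_mono_of_nonneg (Filter.Eventually.of_forall fun x => norm_nonneg _)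
            (((kf_integrable hε).comp_sub_right y).const_mul M)
            (Filter.Eventually.of_forall fun x => ?_)
          show ‖f x * ((kf ε (x - y) : ℝ) : ℂ)‖ ≤ M * kf ε (x - y)
          have hk : ‖((kf ε (x - y) : ℝ) : ℂ)‖ = kf ε (x - y) := by
            rw [Complex.norm_real, Real.norm_eq_abs]
            exact abs_of_nonneg (kf_nonneg hε _)
          rw [norm_mul, hk]
          exact mul_le_mul_of_nonneg_right (hM x) (kf_nonneg hε _)
      _ = M * ∫ x : ℝ, kf ε (x - y) := integral_const_mul _ _
      _ = M * (2*π) := by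
          rw [integral_sub_right_eq_self (μ := volume) (kf ε) y, kf_integral hε]
  calc ∫ u : ℝ, Real.exp (-ε*u^2) * ‖g u‖^2
      = ‖((∫ u : ℝ, Real.exp (-ε*u^2) * ‖g u‖^2 : ℝ) : ℂ)‖ := by
        rw [Complex.norm_real, Real.norm_eq_abs]
        exact (abs_of_nonneg hI0).symm
    _ = ‖∫ y : ℝ, (starRingEnd ℂ) (f y) * ∫ x : ℝ, f x * ((kf ε (x - y) : ℝ):ℂ)‖ := by
        rw [claim1]
    _ ≤ ∫ y : ℝ, ‖(starRingEnd ℂ) (f y) * ∫ x : ℝ, f x * ((kf ε (x - y):ℝ):ℂ)‖ :=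
        norm_integral_le_integral_norm _
    _ ≤ ∫ y : ℝ, ‖f y‖ * (M * (2*π)) := by
        refine integral_mono_of_nonneg (Filter.Eventually.of_forall fun y => norm_nonneg _)
          (hfi.norm.mul_const _) (Filter.Eventually.of_forall fun y => ?_)
        show ‖(starRingEnd ℂ) (f y) * ∫ x : ℝ, f x * ((kf ε (x - y):ℝ):ℂ)‖ ≤ ‖f y‖ * (M * (2*π))
        rw [norm_mul, RCLike.norm_conj]
        exact mul_le_mul_of_nonneg_left (hinner_bd y) (norm_nonneg _)
    _ = 2*π*M * ∫ x : ℝ, ‖f x‖ := by rw [integral_mul_const]; ring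

lemma exp_sq_integrable {f : ℝ → ℂ} (hfi : Integrable f) {ε : ℝ} (hε : 0 < ε) :
    Integrable (fun u : ℝ => Real.exp (-ε*u^2) * ‖fourierT f u‖^2) := by
  have hg : Continuous (fourierT f) := fourierT_continuous hfi
  set R := ∫ x : ℝ, ‖f x‖ with hRdef
  have hR0 : 0 ≤ R := integral_nonneg fun x => norm_nonneg _
  have hgauss : Integrable (fun u : ℝ => Real.exp (-ε*u^2)) := by
    simpa using integrable_exp_neg_mul_sq hε
  refine Integrable.mono' (g := fun u : ℝ => R^2 * Real.exp (-ε*u^2)) (hgauss.const_mul _)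
    (Continuous.aestronglyMeasurable (by fun_prop)) (Filter.Eventually.of_forall fun u => ?_)
  have h1 := fourierT_norm_le f u
  have h2 := Real.exp_nonneg (-ε*u^2)
  have h3 := norm_nonneg (fourierT f u)
  rw [Real.norm_eq_abs, abs_of_nonneg (by positivity)]
  show Real.exp (-ε*u^2) * ‖fourierT f u‖^2 ≤ R^2 * Real.exp (-ε*u^2)
  rw [← hRdef] at h1
  nlinarith [mul_le_mul_of_nonneg_left (mul_le_mul h1 h1 h3 hR0) h2]

lemma sq_fourierT_integrable {f : ℝ → ℂ} (hc : Continuous f) (hs : HasCompactSupport f) :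
    Integrable (fun u : ℝ => ‖fourierT f u‖^2) := by
  obtain ⟨M, hM⟩ := hc.bounded_above_of_compact_support hs
  have hfi : Integrable f := hc.integrable_of_hasCompactSupport hs
  have hg : Continuous (fourierT f) := fourierT_continuous hfi
  set C0 : ℝ := 2*π*M * ∫ x : ℝ, ‖f x‖ with hC0
  constructor
  · exact ((hg.norm).pow 2).aestronglyMeasurable
  · rw [hasFiniteIntegral_iff_norm]
    set F : ℕ → ℝ → ℝ≥0∞ := fun n u =>
      ENNReal.ofReal (Real.exp (-(1/(n+1))*u^2) * ‖fourierT f u‖^2) with hF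
    have hεn : ∀ n : ℕ, (0:ℝ) < 1/(n+1) := fun n => by positivity
    have hFmeas : ∀ n, Measurable (F n) := by
      intro n
      apply ENNReal.measurable_ofReal.comp
      exact ((Real.continuous_exp.comp (by fun_prop)).mul ((hg.norm).pow 2)).measurable
    have hFtend : ∀ u : ℝ, Filter.Tendsto (fun n => F n u) Filter.atTop
        (nhds (ENNReal.ofReal (‖fourierT f u‖^2))) := by
      intro u
      apply (ENNReal.continuous_ofReal.tendsto _).comp
      have h1 : Filter.Tendsto (fun n : ℕ => -(1/(n+1:ℝ))*u^2) Filter.atTop (nhds 0) := by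
        have := tendsto_one_div_add_atTop_nhds_zero_nat (𝕜 := ℝ)
        have h2 := this.neg.mul_const (u^2)
        simpa using h2
      have h3 := (Real.continuous_exp.tendsto 0).comp h1
      rw [Real.exp_zero] at h3
      simpa using h3.mul_const (‖fourierT f u‖^2)
    have key : ∫⁻ u : ℝ, ENNReal.ofReal ‖‖fourierT f u‖^2‖ ≤ ENNReal.ofReal C0 := by
      have e0 : ∀ u : ℝ, ENNReal.ofReal ‖‖fourierT f u‖^2‖
          = Filter.liminf (fun n => F n u) Filter.atTop := by
        intro u
        rw [(hFtend u).liminf_eq, Real.norm_eq_abs, abs_of_nonneg (by positivity)]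
      calc ∫⁻ u : ℝ, ENNReal.ofReal ‖‖fourierT f u‖^2‖
          = ∫⁻ u : ℝ, Filter.liminf (fun n => F n u) Filter.atTop := by
            exact lintegral_congr fun u => e0 u
        _ ≤ Filter.liminf (fun n => ∫⁻ u : ℝ, F n u) Filter.atTop := lintegral_liminf_le hFmeas
        _ ≤ ENNReal.ofReal C0 := by
            have hb : ∀ n : ℕ, (∫⁻ u : ℝ, F n u) ≤ ENNReal.ofReal C0 := by
              intro n
              have hint := exp_sq_integrable hfi (hεn n)
              rw [hF]
              rw [← ofReal_integral_eq_lintegral_ofReal hint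
                (Filter.Eventually.of_forall fun u => by positivity)]
              exact ENNReal.ofReal_le_ofReal (eps_bound hc hs hM (hεn n))
            refine le_trans (Filter.liminf_le_liminf (Filter.Eventually.of_forall hb)) ?_
            simp [Filter.liminf_const]
    exact lt_of_le_of_lt key ENNReal.ofReal_lt_top

lemma fourierT_eq (f : ℝ → ℂ) (l : ℝ) : fourierT f l = FourierTransform.fourier f (l/(2*π)) := by
  rw [Real.fourier_real_eq, fourierT]
  refine integral_congr_ae (Filter.Eventually.of_forall fun x => ?_)
  show f x * Complex.exp (-(Complex.I * (l:ℂ) * (x:ℂ)))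
    = Real.fourierChar (-(x * (l / (2 * π)))) • f x
  rw [Circle.smul_def, Real.fourierChar_apply, mul_comm]
  congr 1
  have e1 : (2*π*(-(x*(l/(2*π)))) : ℝ) = -(l*x) := by
    field_simp
  rw [e1]
  push_cast
  ring

lemma fourierT_deriv {f : ℝ → ℂ} (hf : Integrable f) (hdf : Differentiable ℝ f)
    (hf' : Integrable (deriv f)) (u : ℝ) :
    fourierT (deriv f) u = Complex.I * (u:ℂ) * fourierT f u := by
  rw [fourierT_eq, fourierT_eq, Real.fourier_deriv hf hdf hf']
  show (2 * (π:ℂ) * Complex.I * ((u/(2*π) : ℝ):ℂ)) • FourierTransform.fourier f (u/(2*π)) = _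
  rw [smul_eq_mul]
  congr 1
  push_cast
  have hπ : (π:ℂ) ≠ 0 := Complex.ofReal_ne_zero.mpr Real.pi_ne_zero
  field_simp

lemma weighted_integrable {f : ℝ → ℂ} (hc : Continuous f) (hs : HasCompactSupport f)
    (hdf : Differentiable ℝ f) (hc' : Continuous (deriv f)) (hs' : HasCompactSupport (deriv f)) :
    Integrable (fun u : ℝ => |u| * ‖fourierT f u‖^2) := by
  have hfi : Integrable f := hc.integrable_of_hasCompactSupport hs
  have hfi' : Integrable (deriv f) := hc'.integrable_of_hasCompactSupport hs'
  have h1 := sq_fourierT_integrable hc hs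
  have h2 := sq_fourierT_integrable hc' hs'
  have hg := fourierT_continuous hfi
  refine Integrable.mono' (g := fun u => ‖fourierT f u‖^2 + ‖fourierT (deriv f) u‖^2)
    (h1.add h2)
    (Continuous.aestronglyMeasurable (continuous_abs.mul ((hg.norm).pow 2)))
    (Filter.Eventually.of_forall fun u => ?_)
  rw [Real.norm_eq_abs, abs_of_nonneg (by positivity)]
  show |u| * ‖fourierT f u‖^2 ≤ ‖fourierT f u‖^2 + ‖fourierT (deriv f) u‖^2
  have e1 : ‖fourierT (deriv f) u‖^2 = u^2 * ‖fourierT f u‖^2 := by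
    rw [fourierT_deriv hfi hdf hfi' u, norm_mul, norm_mul]
    simp only [Complex.norm_I, Complex.norm_real, Real.norm_eq_abs, one_mul]
    rw [mul_pow, sq_abs]
  rw [e1]
  have h3 : |u| ≤ 1 + u^2 := by nlinarith [abs_nonneg u, sq_abs u, sq_nonneg (|u| - 1)]
  have hX : (0:ℝ) ≤ ‖fourierT f u‖^2 := by positivity
  nlinarith [mul_le_mul_of_nonneg_right h3 hX]

theorem stmt19 (φ : ℝ → ℝ) (hφc : HasCompactSupport φ) (hφ1 : ContDiff ℝ 1 φ) :
    ∃ C : ℝ, 0 < C ∧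
      ∀ ℓ : ℝ, 0 < ℓ → ∀ m : ℝ,
        H12C (fun x => Complex.exp (Complex.I * (m:ℂ) * (x:ℂ)) * ((φ (x/ℓ) : ℝ) : ℂ))
          ≤ C * Real.sqrt (1 + m^2 * ℓ^2) := by
  set Φ : ℝ → ℂ := fun x => ((φ x : ℝ) : ℂ) with hΦdef
  have hΦc : Continuous Φ := Complex.continuous_ofReal.comp hφ1.continuous
  have hΦs : HasCompactSupport Φ := hφc.comp_left (g := Complex.ofReal) Complex.ofReal_zero
  have hφd : Differentiable ℝ φ := hφ1.differentiable one_ne_zero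
  have hΦhd : ∀ x : ℝ, HasDerivAt Φ ((deriv φ x : ℝ) : ℂ) x := fun x =>
    ((hφd x).hasDerivAt).ofReal_comp
  have hΦd : Differentiable ℝ Φ := fun x => (hΦhd x).differentiableAt
  have hderivΦ : deriv Φ = fun x => ((deriv φ x : ℝ) : ℂ) := funext fun x => (hΦhd x).deriv
  have hc' : Continuous (deriv Φ) := by
    rw [hderivΦ]
    exact Complex.continuous_ofReal.comp (hφ1.continuous_deriv le_rfl)
  have hs' : HasCompactSupport (deriv Φ) := by
    rw [hderivΦ]
    exact (hφc.deriv).comp_left (g := Complex.ofReal) Complex.ofReal_zero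
  have hΦi : Integrable Φ := hΦc.integrable_of_hasCompactSupport hΦs
  set g : ℝ → ℂ := fourierT Φ with hgdef
  have hgc : Continuous g := fourierT_continuous hΦi
  have hAint : Integrable (fun u : ℝ => ‖g u‖^2) := sq_fourierT_integrable hΦc hΦs
  have hBint : Integrable (fun u : ℝ => |u| * ‖g u‖^2) :=
    weighted_integrable hΦc hΦs hΦd hc' hs'
  set A : ℝ := ∫ u : ℝ, ‖g u‖^2 with hAdef
  set B : ℝ := ∫ u : ℝ, |u| * ‖g u‖^2 with hBdef
  have hA0 : 0 ≤ A := integral_nonneg fun u => by positivity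
  have hB0 : 0 ≤ B := integral_nonneg fun u => by positivity
  have hπ2 : (0:ℝ) < 1/(4*π^2) := by positivity
  refine ⟨(1/(4*π^2)) * (A + B) + 1, by positivity, ?_⟩
  intro ℓ hℓ m
  set fml : ℝ → ℂ := fun x => Complex.exp (Complex.I * (m:ℂ) * (x:ℂ)) * ((φ (x/ℓ) : ℝ) : ℂ)
    with hfml
  have hℓ0 : ℓ ≠ 0 := ne_of_gt hℓ
  -- Step A: Fourier transform of the rescaled modulated function
  have hft : ∀ l : ℝ, fourierT fml l = (ℓ:ℂ) * g (ℓ*(l - m)) := by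
    intro l
    have e1 : ∀ x : ℝ, fml x * Complex.exp (-(Complex.I * (l:ℂ) * (x:ℂ)))
        = (fun u : ℝ => Φ u * Complex.exp (-(Complex.I * ((ℓ*(l-m) : ℝ):ℂ) * (u:ℂ)))) (ℓ⁻¹ * x) := by
      intro x
      show Complex.exp (Complex.I * (m:ℂ) * (x:ℂ)) * ((φ (x/ℓ) : ℝ) : ℂ)
          * Complex.exp (-(Complex.I * (l:ℂ) * (x:ℂ)))
        = Φ (ℓ⁻¹ * x) * Complex.exp (-(Complex.I * ((ℓ*(l-m) : ℝ):ℂ) * ((ℓ⁻¹ * x : ℝ):ℂ)))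
      have e2 : (x/ℓ : ℝ) = ℓ⁻¹ * x := by field_simp
      rw [e2]
      have e3 : Complex.exp (Complex.I * (m:ℂ) * (x:ℂ))
            * Complex.exp (-(Complex.I * (l:ℂ) * (x:ℂ)))
          = Complex.exp (-(Complex.I * ((ℓ*(l-m) : ℝ):ℂ) * ((ℓ⁻¹ * x : ℝ):ℂ))) := by
        rw [← Complex.exp_add]
        congr 1
        have hℓc : (ℓ:ℂ) ≠ 0 := Complex.ofReal_ne_zero.mpr hℓ0
        push_cast
        field_simp
        ring
      rw [← e3]
      ring
    calc fourierT fml l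
        = ∫ x : ℝ, (fun u : ℝ => Φ u * Complex.exp (-(Complex.I * ((ℓ*(l-m) : ℝ):ℂ) * (u:ℂ))))
            (ℓ⁻¹ * x) := by
          rw [fourierT]
          exact integral_congr_ae (Filter.Eventually.of_forall fun x => e1 x)
      _ = |(ℓ⁻¹)⁻¹| • ∫ u : ℝ, Φ u * Complex.exp (-(Complex.I * ((ℓ*(l-m) : ℝ):ℂ) * (u:ℂ))) :=
          MeasureTheory.Measure.integral_comp_mul_left
            (fun u : ℝ => Φ u * Complex.exp (-(Complex.I * ((ℓ*(l-m) : ℝ):ℂ) * (u:ℂ)))) ℓ⁻¹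
      _ = (ℓ:ℂ) * g (ℓ*(l - m)) := by
          rw [inv_inv, abs_of_pos hℓ, hgdef, fourierT, Complex.real_smul]
  -- Step B: change of variables in the H^{1/2} integral
  set Gfun : ℝ → ℝ := fun u => |m + u/ℓ| * (ℓ^2 * ‖g u‖^2) with hGdef
  set D : ℝ → ℝ := fun u => (|m| * ℓ^2) * ‖g u‖^2 + ℓ * (|u| * ‖g u‖^2) with hDdef
  have hDint : Integrable D := (hAint.const_mul _).add (hBint.const_mul _)
  have hGle : ∀ u : ℝ, Gfun u ≤ D u := by
    intro u
    show |m + u/ℓ| * (ℓ^2 * ‖g u‖^2) ≤ (|m| * ℓ^2) * ‖g u‖^2 + ℓ * (|u| * ‖g u‖^2)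
    have h1 : |m + u/ℓ| ≤ |m| + |u|/ℓ := by
      refine le_trans (abs_add_le _ _) ?_
      rw [abs_div, abs_of_pos hℓ]
    have hX : (0:ℝ) ≤ ‖g u‖^2 := by positivity
    have h2 : |m + u/ℓ| * (ℓ^2 * ‖g u‖^2) ≤ (|m| + |u|/ℓ) * (ℓ^2 * ‖g u‖^2) :=
      mul_le_mul_of_nonneg_right h1 (by positivity)
    refine le_trans h2 (le_of_eq ?_)
    field_simp
    all_goals ring
  have hint_eq : ∫ l : ℝ, |l| * ‖fourierT fml l‖^2 = ℓ⁻¹ * ∫ u : ℝ, Gfun u := by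
    calc ∫ l : ℝ, |l| * ‖fourierT fml l‖^2
        = ∫ l : ℝ, (fun t : ℝ => Gfun (ℓ * t)) (l - m) := by
          refine integral_congr_ae (Filter.Eventually.of_forall fun l => ?_)
          show |l| * ‖fourierT fml l‖^2 = Gfun (ℓ * (l - m))
          rw [hft l, hGdef]
          show |l| * ‖(ℓ:ℂ) * g (ℓ*(l - m))‖^2
            = |m + ℓ*(l-m)/ℓ| * (ℓ^2 * ‖g (ℓ*(l-m))‖^2)
          have e4 : m + ℓ*(l-m)/ℓ = l := by field_simp; ring
          rw [e4, norm_mul, mul_pow]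
          have e5 : ‖(ℓ:ℂ)‖ = ℓ := by
            rw [Complex.norm_real, Real.norm_eq_abs]
            exact abs_of_pos hℓ
          rw [e5]
          all_goals ring
      _ = ∫ t : ℝ, Gfun (ℓ * t) :=
          integral_sub_right_eq_self (μ := volume) (fun t : ℝ => Gfun (ℓ * t)) m
      _ = |ℓ⁻¹| • ∫ u : ℝ, Gfun u := MeasureTheory.Measure.integral_comp_mul_left Gfun ℓ
      _ = ℓ⁻¹ * ∫ u : ℝ, Gfun u := by
          rw [abs_of_pos (inv_pos.mpr hℓ), smul_eq_mul]
  have hGint_le : ∫ u : ℝ, Gfun u ≤ (|m| * ℓ^2) * A + ℓ * B := by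
    have h1 : ∫ u : ℝ, Gfun u ≤ ∫ u : ℝ, D u :=
      integral_mono_of_nonneg
        (Filter.Eventually.of_forall fun u => by
          show 0 ≤ |m + u/ℓ| * (ℓ^2 * ‖g u‖^2); positivity)
        hDint (Filter.Eventually.of_forall hGle)
    refine le_trans h1 (le_of_eq ?_)
    rw [hDdef]
    rw [integral_add (hAint.const_mul _) (hBint.const_mul _),
      integral_const_mul, integral_const_mul, ← hAdef, ← hBdef]
  -- conclude
  have hsq : Real.sqrt (m^2*ℓ^2) ≤ Real.sqrt (1 + m^2*ℓ^2) :=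
    Real.sqrt_le_sqrt (by nlinarith)
  have hs1 : |m| * ℓ ≤ Real.sqrt (1 + m^2*ℓ^2) := by
    have : Real.sqrt (m^2*ℓ^2) = |m| * ℓ := by
      rw [show m^2*ℓ^2 = (|m| * ℓ)^2 by rw [mul_pow, sq_abs], Real.sqrt_sq (by positivity)]
    linarith [hsq, this.symm.le]
  have hs2 : (1:ℝ) ≤ Real.sqrt (1 + m^2*ℓ^2) := by
    have h9 : Real.sqrt 1 ≤ Real.sqrt (1 + m^2*ℓ^2) := Real.sqrt_le_sqrt (by nlinarith)
    rwa [Real.sqrt_one] at h9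
  have hsqnn : (0:ℝ) ≤ Real.sqrt (1 + m^2*ℓ^2) := Real.sqrt_nonneg _
  have hH : H12C fml = (1/(4*π^2)) * ∫ l : ℝ, |l| * ‖fourierT fml l‖^2 := rfl
  calc H12C fml
      = (1/(4*π^2)) * ∫ l : ℝ, |l| * ‖fourierT fml l‖^2 := hH
    _ = (1/(4*π^2)) * (ℓ⁻¹ * ∫ u : ℝ, Gfun u) := by rw [hint_eq]
    _ ≤ (1/(4*π^2)) * (ℓ⁻¹ * ((|m| * ℓ^2) * A + ℓ * B)) := by
        have := mul_le_mul_of_nonneg_left hGint_le (le_of_lt (inv_pos.mpr hℓ))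
        exact mul_le_mul_of_nonneg_left this (le_of_lt hπ2)
    _ = (1/(4*π^2)) * ((|m| * ℓ) * A + B) := by
        field_simp
        all_goals ring
    _ ≤ (1/(4*π^2)) * (A + B) * Real.sqrt (1 + m^2*ℓ^2) := by
        have e6 : (|m| * ℓ) * A ≤ Real.sqrt (1 + m^2*ℓ^2) * A :=
          mul_le_mul_of_nonneg_right hs1 hA0
        have e7 : B ≤ Real.sqrt (1 + m^2*ℓ^2) * B := by
          nlinarith
        have e8 : (|m| * ℓ) * A + B ≤ Real.sqrt (1 + m^2*ℓ^2) * (A + B) := by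
          nlinarith
        calc (1/(4*π^2)) * ((|m| * ℓ) * A + B)
            ≤ (1/(4*π^2)) * (Real.sqrt (1 + m^2*ℓ^2) * (A + B)) :=
              mul_le_mul_of_nonneg_left e8 (le_of_lt hπ2)
          _ = (1/(4*π^2)) * (A + B) * Real.sqrt (1 + m^2*ℓ^2) := by ring
    _ ≤ ((1/(4*π^2)) * (A + B) + 1) * Real.sqrt (1 + m^2*ℓ^2) := by
        nlinarith

end
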